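/- With P_z(λ) as defined (sum over ordered set partitions I of {1,...,|λ|} with block sizes λ_j of ∏_j ∏_{a∈I_j} y_a^{(j)} divided by the generalized resultant of the z-variables), the operator e^z_{k,l} = ∑_a z_a y_a^{(k)} ∂/∂y_a^{(l)} satisfies e^z_{k,l} P_z(λ) = 0 whenever λ_k > λ_l. -/

import Mathlib

open MvPolynomial Finset

section Helpers
open Polynomial


lemma lagrange_zero {ι : Type*} [DecidableEq ι] (s : Finset ι) (x : ι → ℂ) (hx : Set.InjOn x s)
    (p : Polynomial ℂ) (hp : p.degree < ((s.card - 1 : ℕ) : WithBot ℕ)) :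
    ∑ i ∈ s, Polynomial.eval (x i) p * (∏ j ∈ s.erase i, (x i - x j))⁻¹ = 0 := by
  have hdeg : p.degree < s.card := lt_of_lt_of_le hp (by exact_mod_cast Nat.sub_le _ _)
  have hinterp := Lagrange.eq_interpolate hx hdeg
  have hco := congrArg (fun q => Polynomial.coeff q (s.card - 1)) hinterp
  rw [Lagrange.interpolate_apply] at hco
  simp only [Polynomial.finset_sum_coeff] at hco
  have hb : ∀ i ∈ s, (Polynomial.C (eval (x i) p) * Lagrange.basis s x i).coeff (s.card - 1)
      = eval (x i) p * (∏ j ∈ s.erase i, (x i - x j))⁻¹ := by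
    intro i hi
    rw [Polynomial.coeff_C_mul]
    congr 1
    unfold Lagrange.basis Lagrange.basisDivisor
    rw [Finset.prod_mul_distrib, ← map_prod, Polynomial.coeff_C_mul]
    have hmonic : (∏ j ∈ s.erase i, (Polynomial.X - Polynomial.C (x j))).Monic :=
      monic_prod_of_monic _ _ fun j _ => monic_X_sub_C _
    have hdeg2 : (∏ j ∈ s.erase i, (Polynomial.X - Polynomial.C (x j))).natDegree
        = s.card - 1 := by
      rw [natDegree_prod _ _ fun j _ => X_sub_C_ne_zero _]
      simp [Finset.card_erase_of_mem hi]
    rw [← hdeg2, hmonic.coeff_natDegree, mul_one, ← Finset.prod_inv_distrib]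
  rw [Finset.sum_congr rfl hb] at hco
  rw [← hco, Polynomial.coeff_eq_zero_of_degree_lt hp]

lemma ite_split_above {m : ℕ} {k l w : Fin m} (hkl : k < l) (x : ℂ) :
    (if k < w then x else 1)
      = ((if k < w ∧ w < l then x else 1) * if w = l then x else 1) * if l < w then x else 1 := by
  split_ifs <;> (try ring) <;>
    (exfalso; simp only [Fin.lt_def, Fin.ext_iff, not_and, not_lt] at *; omega)

lemma ite_split_below {m : ℕ} {k l w : Fin m} (hkl : k < l) (x : ℂ) :
    (if w < l then x else 1)
      = ((if w < k then x else 1) * if w = k then x else 1) * if k < w ∧ w < l then x else 1 := by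
  split_ifs <;> (try ring) <;>
    (exfalso; simp only [Fin.lt_def, Fin.ext_iff, not_and, not_lt] at *; omega)

/-- generalized resultant -/
def Rres {n m : ℕ} (z : Fin n → ℂ) (f : Fin n → Fin m) : ℂ :=
  ∏ b, ∏ c ∈ univ.filter (fun c => f b < f c), (z b - z c)

lemma Rres_ne_zero {n m : ℕ} (z : Fin n → ℂ) (hz : Function.Injective z)
    (f : Fin n → Fin m) : Rres z f ≠ 0 := by
  rw [Rres]
  apply Finset.prod_ne_zero_iff.mpr
  intro b _
  apply Finset.prod_ne_zero_iff.mpr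
  intro c hc
  have hlt : f b < f c := (Finset.mem_filter.mp hc).2
  have hbc : b ≠ c := fun h => by simp [h] at hlt
  exact sub_ne_zero.mpr fun h => hbc (hz h)

lemma Rres_split {n m : ℕ} (z : Fin n → ℂ) (f : Fin n → Fin m) (a : Fin n) :
    Rres z f = (∏ p ∈ (univ ×ˢ univ).filter (fun p : Fin n × Fin n => ¬(p.1 = a ∨ p.2 = a)),
        (if f p.1 < f p.2 then z p.1 - z p.2 else 1))
      * ((∏ b, (if f a < f b then z a - z b else 1))
        * ∏ b ∈ univ.erase a, (if f b < f a then z b - z a else 1)) := by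
  have : Rres z f = ∏ p ∈ univ ×ˢ univ, (if f p.1 < f p.2 then z p.1 - z p.2 else 1) := by
    rw [Rres, Finset.prod_product]
    exact Finset.prod_congr rfl fun b _ => (Finset.prod_filter _ _)
  rw [this, ← Finset.prod_filter_mul_prod_filter_not (univ ×ˢ univ)
    (fun p : Fin n × Fin n => p.1 = a ∨ p.2 = a), mul_comm]
  congr 1
  have hset : (univ ×ˢ univ).filter (fun p : Fin n × Fin n => p.1 = a ∨ p.2 = a)
      = ({a} ×ˢ univ) ∪ ((univ.erase a) ×ˢ {a}) := by
    ext p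
    simp only [mem_filter, mem_product, mem_union, mem_singleton, mem_erase, mem_univ,
      true_and, and_true]
    tauto
  rw [hset, Finset.prod_union, Finset.prod_product, Finset.prod_singleton, Finset.prod_product]
  · congr 1
    exact Finset.prod_congr rfl fun b _ => Finset.prod_singleton _ _
  · rw [Finset.disjoint_left]
    rintro p hp hq
    simp only [mem_product, mem_singleton, mem_erase] at hp hq
    exact hq.1.1 hp.1

lemma Rres_key {n m : ℕ} (z : Fin n → ℂ) (g : Fin n → Fin m) (k l : Fin m) (hkl : k < l)
    (a : Fin n) (hga : g a = k) :
    Rres z (Function.update g a l)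
      * ((∏ b ∈ univ.filter (fun b => k < g b ∧ g b < l), (z a - z b))
        * ∏ b ∈ univ.filter (fun b => g b = l), (z a - z b))
    = Rres z g
      * ((∏ b ∈ ((univ.filter fun b => g b = k)).erase a, (z b - z a))
        * ∏ b ∈ univ.filter (fun b => k < g b ∧ g b < l), (z b - z a)) := by
  classical
  set f : Fin n → Fin m := Function.update g a l with hf
  have hcst_f : (∏ p ∈ (univ ×ˢ univ).filter (fun p : Fin n × Fin n => ¬(p.1 = a ∨ p.2 = a)),
      (if f p.1 < f p.2 then z p.1 - z p.2 else 1))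
      = (∏ p ∈ (univ ×ˢ univ).filter (fun p : Fin n × Fin n => ¬(p.1 = a ∨ p.2 = a)),
      (if g p.1 < g p.2 then z p.1 - z p.2 else 1)) := by
    refine Finset.prod_congr rfl fun p hp => ?_
    simp only [mem_filter, not_or] at hp
    rw [hf, Function.update_of_ne hp.2.1, Function.update_of_ne hp.2.2]
  have hag : (∏ b, (if g a < g b then z a - z b else 1))
      = ((∏ b ∈ univ.filter (fun b => k < g b ∧ g b < l), (z a - z b))
          * ∏ b ∈ univ.filter (fun b => g b = l), (z a - z b))
        * ∏ b ∈ univ.filter (fun b => l < g b), (z a - z b) := by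
    have h1 : ∀ b ∈ (univ : Finset (Fin n)), (if g a < g b then z a - z b else 1)
        = ((if k < g b ∧ g b < l then z a - z b else 1) * if g b = l then z a - z b else 1)
          * if l < g b then z a - z b else 1 := fun b _ => by
      rw [hga]; exact ite_split_above hkl _
    rw [Finset.prod_congr rfl h1, Finset.prod_mul_distrib, Finset.prod_mul_distrib,
      ← Finset.prod_filter, ← Finset.prod_filter, ← Finset.prod_filter]
  have hbg : (∏ b ∈ univ.erase a, (if g b < g a then z b - z a else 1))
      = ∏ b ∈ univ.filter (fun b => g b < k), (z b - z a) := by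
    have h1 : ∀ b ∈ univ.erase a, (if g b < g a then z b - z a else 1)
        = (if g b < k then z b - z a else 1) := fun b _ => by rw [hga]
    rw [Finset.prod_congr rfl h1, ← Finset.prod_filter, Finset.filter_erase,
      Finset.erase_eq_of_notMem (by simp [hga])]
  have hfa : f a = l := Function.update_self a l g
  have haf : (∏ b, (if f a < f b then z a - z b else 1))
      = ∏ b ∈ univ.filter (fun b => l < g b), (z a - z b) := by
    have h1 : ∀ b ∈ (univ : Finset (Fin n)), (if f a < f b then z a - z b else 1)
        = (if l < g b then z a - z b else 1) := by
      intro b _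
      rcases eq_or_ne b a with rfl | hb
      · simp [hfa, hga, lt_irrefl, not_lt_of_gt hkl]
      · rw [hfa, hf, Function.update_of_ne hb]
    rw [Finset.prod_congr rfl h1, ← Finset.prod_filter]
  have hbf : (∏ b ∈ univ.erase a, (if f b < f a then z b - z a else 1))
      = ((∏ b ∈ univ.filter (fun b => g b < k), (z b - z a))
          * ∏ b ∈ ((univ.filter fun b => g b = k)).erase a, (z b - z a))
        * ∏ b ∈ univ.filter (fun b => k < g b ∧ g b < l), (z b - z a) := by
    have h1 : ∀ b ∈ univ.erase a, (if f b < f a then z b - z a else 1)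
        = ((if g b < k then z b - z a else 1) * if g b = k then z b - z a else 1)
          * if k < g b ∧ g b < l then z b - z a else 1 := by
      intro b hb
      have hb' : b ≠ a := (Finset.mem_erase.mp hb).1
      rw [hfa, hf, Function.update_of_ne hb']
      exact ite_split_below hkl _
    have e1 : ∏ b ∈ ((univ.filter fun b => g b < k)).erase a, (z b - z a)
        = ∏ b ∈ univ.filter (fun b => g b < k), (z b - z a) := by
      rw [Finset.erase_eq_of_notMem (by simp [hga])]
    have e3 : ∏ b ∈ ((univ.filter fun b => k < g b ∧ g b < l)).erase a, (z b - z a)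
        = ∏ b ∈ univ.filter (fun b => k < g b ∧ g b < l), (z b - z a) := by
      rw [Finset.erase_eq_of_notMem (by simp [hga])]
    rw [Finset.prod_congr rfl h1, Finset.prod_mul_distrib, Finset.prod_mul_distrib,
      ← Finset.prod_filter, ← Finset.prod_filter, ← Finset.prod_filter,
      Finset.filter_erase, Finset.filter_erase, Finset.filter_erase, e1, e3]
  rw [Rres_split z f a, Rres_split z g a, hcst_f, hag, hbg, haf, hbf]
  ring

lemma scalar_key {n m : ℕ} (z : Fin n → ℂ) (hz : Function.Injective z)
    (g : Fin n → Fin m) (k l : Fin m) (hkl : k < l)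
    (hcard : (univ.filter fun b => g b = l).card + 3 ≤ (univ.filter fun b => g b = k).card) :
    ∑ a ∈ univ.filter (fun a => g a = k), z a * (Rres z (Function.update g a l))⁻¹ = 0 := by
  classical
  set S := univ.filter (fun b : Fin n => g b = k) with hSdef
  set T := univ.filter (fun b : Fin n => g b = l) with hTdef
  set Mid := univ.filter (fun b : Fin n => k < g b ∧ g b < l) with hMiddef
  set p : Polynomial ℂ := Polynomial.X * ∏ b ∈ T, (Polynomial.X - Polynomial.C (z b)) with hpdef
  set ε : ℂ := (-1) ^ (S.card - 1 + Mid.card) with hεdef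
  have hεne : ε ≠ 0 := pow_ne_zero _ (by norm_num)
  have hRgne : Rres z g ≠ 0 := Rres_ne_zero z hz g
  have hsub_ne : ∀ a b : Fin n, a ≠ b → z a - z b ≠ 0 := fun a b hab =>
    sub_ne_zero.mpr fun h => hab (hz h)
  have sgn : ∀ (u : Finset (Fin n)) (w : ℂ),
      ∏ b ∈ u, (z b - w) = (-1 : ℂ) ^ u.card * ∏ b ∈ u, (w - z b) := by
    intro u w
    calc ∏ b ∈ u, (z b - w) = ∏ b ∈ u, ((-1) * (w - z b)) :=
          Finset.prod_congr rfl fun b _ => by ring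
    _ = (∏ _b ∈ u, (-1 : ℂ)) * ∏ b ∈ u, (w - z b) := Finset.prod_mul_distrib
    _ = (-1 : ℂ) ^ u.card * ∏ b ∈ u, (w - z b) := by rw [Finset.prod_const]
  have hterm : ∀ a ∈ S, z a * (Rres z (Function.update g a l))⁻¹
      = (Rres z g * ε)⁻¹
        * (Polynomial.eval (z a) p * (∏ b ∈ S.erase a, (z a - z b))⁻¹) := by
    intro a haS
    have hga : g a = k := by
      rw [hSdef] at haS; exact (Finset.mem_filter.mp haS).2
    have hMidne : (∏ b ∈ Mid, (z a - z b)) ≠ 0 := by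
      apply Finset.prod_ne_zero_iff.mpr
      intro b hb
      rw [hMiddef] at hb
      have := (Finset.mem_filter.mp hb).2
      exact hsub_ne a b (fun h => by rw [← h, hga] at this; exact lt_irrefl k this.1)
    have hTne : (∏ b ∈ T, (z a - z b)) ≠ 0 := by
      apply Finset.prod_ne_zero_iff.mpr
      intro b hb
      rw [hTdef] at hb
      have hbl := (Finset.mem_filter.mp hb).2
      exact hsub_ne a b (fun h => by rw [← h, hga] at hbl; exact absurd hbl (ne_of_lt hkl))
    have hSne : (∏ b ∈ S.erase a, (z a - z b)) ≠ 0 := by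
      apply Finset.prod_ne_zero_iff.mpr
      intro b hb
      exact hsub_ne a b (Ne.symm (Finset.mem_erase.mp hb).1)
    have key := Rres_key z g k l hkl a hga
    rw [← hSdef, ← hTdef, ← hMiddef] at key
    have hcerase : (S.erase a).card = S.card - 1 := Finset.card_erase_of_mem haS
    have key2 : (Rres z (Function.update g a l) * ∏ b ∈ T, (z a - z b))
          * ∏ b ∈ Mid, (z a - z b)
        = (Rres z g * ε * ∏ b ∈ S.erase a, (z a - z b)) * ∏ b ∈ Mid, (z a - z b) := by
      calc (Rres z (Function.update g a l) * ∏ b ∈ T, (z a - z b)) * ∏ b ∈ Mid, (z a - z b)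
          = Rres z (Function.update g a l)
            * ((∏ b ∈ Mid, (z a - z b)) * ∏ b ∈ T, (z a - z b)) := by ring
      _ = Rres z g * ((∏ b ∈ S.erase a, (z b - z a)) * ∏ b ∈ Mid, (z b - z a)) := key
      _ = _ := by
            rw [sgn (S.erase a) (z a), sgn Mid (z a), hcerase, hεdef, pow_add]; ring
    have key3 := mul_right_cancel₀ hMidne key2
    have hRf : Rres z (Function.update g a l)
        = (Rres z g * ε * ∏ b ∈ S.erase a, (z a - z b)) / ∏ b ∈ T, (z a - z b) :=
      (eq_div_iff hTne).mpr key3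
    have heval : Polynomial.eval (z a) p = z a * ∏ b ∈ T, (z a - z b) := by
      simp [hpdef, Polynomial.eval_prod]
    rw [hRf, heval]
    field_simp
  rw [Finset.sum_congr rfl hterm, ← Finset.mul_sum]
  have hcard' : T.card + 3 ≤ S.card := hcard
  have hprodne : (∏ b ∈ T, (Polynomial.X - Polynomial.C (z b))) ≠ 0 :=
    (monic_prod_of_monic _ _ fun j _ => monic_X_sub_C _).ne_zero
  have hpne : p ≠ 0 := by
    rw [hpdef]; exact mul_ne_zero Polynomial.X_ne_zero hprodne
  have hndeg : p.natDegree = T.card + 1 := by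
    rw [hpdef, Polynomial.natDegree_mul Polynomial.X_ne_zero hprodne, Polynomial.natDegree_X,
      Polynomial.natDegree_prod _ _ fun j _ => Polynomial.X_sub_C_ne_zero _]
    simp [add_comm]
  have hdeg : p.degree < ((S.card - 1 : ℕ) : WithBot ℕ) := by
    rw [Polynomial.degree_eq_natDegree hpne, hndeg]
    exact_mod_cast (by omega : T.card + 1 < S.card - 1)
  rw [lagrange_zero S z (hz.injOn) p hdeg, mul_zero]

end Helpers


lemma prod_X_eq_monomial {n m : ℕ} (f : Fin n → Fin m) :
    (∏ a : Fin n, (X (f a, a) : MvPolynomial (Fin m × Fin n) ℂ))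
      = monomial (∑ b : Fin n, Finsupp.single (f b, b) 1) 1 := by
  classical
  have h : ∀ s : Finset (Fin n),
      (∏ a ∈ s, (X (f a, a) : MvPolynomial (Fin m × Fin n) ℂ))
        = monomial (∑ b ∈ s, Finsupp.single (f b, b) 1) 1 := by
    intro s
    induction s using Finset.induction with
    | empty => simp
    | insert _ _ hnotmem ih =>
        rw [Finset.prod_insert hnotmem, Finset.sum_insert hnotmem, ih,
          ← pow_one (X _ : MvPolynomial (Fin m × Fin n) ℂ), X_pow_eq_monomial,
          monomial_mul, one_mul]
  exact h univ

lemma sum_single_apply {n m : ℕ} (f : Fin n → Fin m) (j : Fin m) (a : Fin n) :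
    (∑ b : Fin n, Finsupp.single ((f b, b) : Fin m × Fin n) (1:ℕ)) (j, a)
      = if f a = j then 1 else 0 := by
  rw [Finset.sum_apply']
  rw [Finset.sum_eq_single a]
  · simp [Finsupp.single_apply, Prod.ext_iff]
  · intro b _ hb; simp [Finsupp.single_apply, Prod.ext_iff, hb]
  · simp

lemma exp_update {n m : ℕ} (f : Fin n → Fin m) (a : Fin n) (k l : Fin m) (hfa : f a = l) :
    Finsupp.single ((k, a) : Fin m × Fin n) 1
        + ((∑ b : Fin n, Finsupp.single ((f b, b) : Fin m × Fin n) 1)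
          - Finsupp.single (l, a) 1)
      = ∑ b : Fin n, Finsupp.single ((Function.update f a k b, b) : Fin m × Fin n) 1 := by
  classical
  have h1 : (∑ b : Fin n, Finsupp.single ((f b, b) : Fin m × Fin n) (1:ℕ))
      = (∑ b ∈ univ.erase a, Finsupp.single ((f b, b) : Fin m × Fin n) 1)
        + Finsupp.single (l, a) 1 := by
    rw [← Finset.sum_erase_add univ _ (mem_univ a), hfa]
  have h2 : (∑ b : Fin n, Finsupp.single ((Function.update f a k b, b) : Fin m × Fin n) (1:ℕ))
      = (∑ b ∈ univ.erase a, Finsupp.single ((Function.update f a k b, b) : Fin m × Fin n) 1)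
        + Finsupp.single (k, a) 1 := by
    rw [← Finset.sum_erase_add univ _ (mem_univ a), Function.update_self]
  rw [h1, add_tsub_cancel_right, h2, add_comm]
  congr 1
  exact Finset.sum_congr rfl fun b hb => by
    rw [Function.update_of_ne (Finset.mem_erase.mp hb).1]

lemma card_fiber_update {n m : ℕ} (f : Fin n → Fin m) (a : Fin n) (v j : Fin m) :
    (univ.filter fun b => Function.update f a v b = j).card + (if f a = j then 1 else 0)
      = (univ.filter fun b => f b = j).card + (if v = j then 1 else 0) := by
  classical
  have herase : ((univ.filter fun b => Function.update f a v b = j).erase a)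
      = ((univ.filter fun b => f b = j).erase a) := by
    ext b
    simp only [mem_erase, mem_filter, mem_univ, true_and]
    constructor
    · rintro ⟨hb, h⟩; exact ⟨hb, by rwa [Function.update_of_ne hb] at h⟩
    · rintro ⟨hb, h⟩; exact ⟨hb, by rwa [Function.update_of_ne hb]⟩
  have hcard : ∀ C : Finset (Fin n), C.card = (C.erase a).card + (if a ∈ C then 1 else 0) := by
    intro C
    by_cases h : a ∈ C
    · rw [if_pos h, ← Finset.card_erase_add_one h]
    · rw [if_neg h, Finset.erase_eq_of_notMem h, add_zero]
  rw [hcard (univ.filter fun b => Function.update f a v b = j),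
      hcard (univ.filter fun b => f b = j), herase]
  by_cases h1 : v = j <;> by_cases h2 : f a = j <;>
    simp [h1, h2, Function.update_self] <;> omega

lemma pderiv_monomial' {σ : Type*} [DecidableEq σ] (i : σ) (s : σ →₀ ℕ) (a : ℂ) :
    pderiv i (monomial s a : MvPolynomial σ ℂ)
      = monomial (s - Finsupp.single i 1) (a * (s i : ℂ)) :=
  MvPolynomial.pderiv_monomial

/-- With `P_z(λ)` as in the paper (sum over ordered set partitions with block sizes
`λ j` of the `y`-monomials divided by the generalized resultant of the `z`'s), the
operator `e^z_{k,l} = ∑_a z_a y_a^{(k)} ∂/∂y_a^{(l)}` annihilates `P_z(λ)` whenever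
`λ k > λ l`. Here `X (j, a)` stands for `y_a^{(j)}`. -/
theorem ezkl_annihilates_P
    (m n : ℕ) (lam : Fin m → ℕ) (hlam : Antitone lam) (hn : n = ∑ j, lam j)
    (z : Fin n → ℂ) (hz : Function.Injective z)
    (k l : Fin m) (hlamkl : lam l < lam k)
    (P : MvPolynomial (Fin m × Fin n) ℂ)
    (hP : P = ∑ f ∈ Finset.univ.filter
        (fun f : Fin n → Fin m => ∀ j, (Finset.univ.filter fun a => f a = j).card = lam j),
      C ((∏ a : Fin n, ∏ b ∈ Finset.univ.filter (fun b => f a < f b), (z a - z b))⁻¹) *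
        ∏ a : Fin n, X (f a, a)) :
    ∑ a : Fin n, C (z a) * X (k, a) * pderiv (l, a) P = 0 := by
  classical
  subst hP
  have hkl : k < l := by
    rcases lt_trichotomy k l with h | h | h
    · exact h
    · exact absurd (h ▸ hlamkl) (lt_irrefl _)
    · exact absurd (hlam h.le) (by omega)
  have hklne : k ≠ l := ne_of_lt hkl
  set F : Finset (Fin n → Fin m) := univ.filter
      (fun f : Fin n → Fin m => ∀ j, (univ.filter fun a => f a = j).card = lam j) with hFdef
  set F' : Finset (Fin n → Fin m) := univ.filter
      (fun g : Fin n → Fin m => ∀ j, (univ.filter fun a => g a = j).card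
        + (if l = j then 1 else 0) = lam j + (if k = j then 1 else 0)) with hF'def
  -- rewrite the inner polynomial as monomials
  have hmono : ∀ f : Fin n → Fin m,
      C ((∏ a : Fin n, ∏ b ∈ univ.filter (fun b => f a < f b), (z a - z b))⁻¹) *
        ∏ a : Fin n, X (f a, a)
      = monomial (∑ b : Fin n, Finsupp.single (f b, b) 1) ((Rres z f)⁻¹) := by
    intro f
    rw [prod_X_eq_monomial, C_mul_monomial, mul_one, Rres]
  simp only [hmono, map_sum, pderiv_monomial', Finset.mul_sum]
  rw [Finset.sum_comm]
  have hinner : ∀ f ∈ F,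
      (∑ a : Fin n, C (z a) * X (k, a)
        * monomial ((∑ b : Fin n, Finsupp.single (f b, b) 1) - Finsupp.single (l, a) 1)
          ((Rres z f)⁻¹
            * (((∑ b : Fin n, Finsupp.single (f b, b) 1 : (Fin m × Fin n) →₀ ℕ)) (l, a) : ℂ)))
      = ∑ a ∈ univ.filter (fun a => f a = l),
          monomial (∑ b : Fin n, Finsupp.single (Function.update f a k b, b) 1)
            (z a * (Rres z f)⁻¹) := by
    intro f _
    rw [Finset.sum_filter]
    refine Finset.sum_congr rfl fun a _ => ?_
    by_cases hfa : f a = l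
    · rw [if_pos hfa]
      simp only [sum_single_apply, if_pos hfa, Nat.cast_one, mul_one]
      rw [C_mul_X_eq_monomial, monomial_mul, exp_update f a k l hfa]
    · rw [if_neg hfa]
      simp only [sum_single_apply, if_neg hfa, Nat.cast_zero, mul_zero, map_zero]
  rw [Finset.sum_congr rfl hinner, Finset.sum_sigma']
  have hbij : ∑ x ∈ F.sigma (fun f => univ.filter (fun a => f a = l)),
        monomial (∑ b : Fin n, Finsupp.single (Function.update x.1 x.2 k b, b) 1)
          (z x.2 * (Rres z x.1)⁻¹)
      = ∑ y ∈ F'.sigma (fun g => univ.filter (fun a => g a = k)),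
        monomial (∑ b : Fin n, Finsupp.single (y.1 b, b) 1)
          (z y.2 * (Rres z (Function.update y.1 y.2 l))⁻¹) := by
    refine Finset.sum_bij'
      (fun x _ => (⟨Function.update x.1 x.2 k, x.2⟩ : Σ _ : Fin n → Fin m, Fin n))
      (fun y _ => (⟨Function.update y.1 y.2 l, y.2⟩ : Σ _ : Fin n → Fin m, Fin n))
      ?_ ?_ ?_ ?_ ?_
    · rintro ⟨f, a⟩ hx
      rw [Finset.mem_sigma] at hx ⊢
      dsimp only
      obtain ⟨hfF, hfa⟩ := hx
      rw [hFdef, Finset.mem_filter] at hfF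
      rw [Finset.mem_filter] at hfa
      have hfal : f a = l := hfa.2
      constructor
      · rw [hF'def, Finset.mem_filter]
        refine ⟨mem_univ _, fun j => ?_⟩
        have h := card_fiber_update f a k j
        rw [hfF.2 j, hfal] at h
        exact h
      · simp
    · rintro ⟨g, a⟩ hy
      rw [Finset.mem_sigma] at hy ⊢
      dsimp only
      obtain ⟨hgF, hga⟩ := hy
      rw [hF'def, Finset.mem_filter] at hgF
      rw [Finset.mem_filter] at hga
      have hgak : g a = k := hga.2
      constructor
      · rw [hFdef, Finset.mem_filter]
        refine ⟨mem_univ _, fun j => ?_⟩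
        have h := card_fiber_update g a l j
        have h2 := hgF.2 j
        rw [hgak] at h
        by_cases h1 : l = j <;> by_cases h3 : k = j
        · exact absurd (h3.trans h1.symm) hklne
        · simp only [if_pos h1, if_neg h3] at h h2; omega
        · simp only [if_neg h1, if_pos h3] at h h2; omega
        · simp only [if_neg h1, if_neg h3] at h h2; omega
      · simp
    · rintro ⟨f, a⟩ hx
      simp only [Finset.mem_sigma, Finset.mem_filter] at hx
      have hfal : f a = l := hx.2.2
      have : Function.update (Function.update f a k) a l = f := by
        rw [Function.update_idem, ← hfal]
        exact Function.update_eq_self a f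
      simp [this]
    · rintro ⟨g, a⟩ hy
      simp only [Finset.mem_sigma, Finset.mem_filter] at hy
      have hgak : g a = k := hy.2.2
      have : Function.update (Function.update g a l) a k = g := by
        rw [Function.update_idem, ← hgak]
        exact Function.update_eq_self a g
      simp [this]
    · rintro ⟨f, a⟩ hx
      simp only [Finset.mem_sigma, Finset.mem_filter] at hx
      have hfal : f a = l := hx.2.2
      have : Function.update (Function.update f a k) a l = f := by
        rw [Function.update_idem, ← hfal]
        exact Function.update_eq_self a f
      simp [this]
  rw [hbij, Finset.sum_sigma]
  refine Finset.sum_eq_zero fun g hg => ?_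
  dsimp only
  rw [← map_sum]
  have hkey : ∑ a ∈ univ.filter (fun a => g a = k),
      z a * (Rres z (Function.update g a l))⁻¹ = 0 := by
    rw [hF'def, Finset.mem_filter] at hg
    have hck := hg.2 k
    have hcl := hg.2 l
    rw [if_neg (Ne.symm hklne), if_pos rfl] at hck
    rw [if_pos rfl, if_neg hklne] at hcl
    exact scalar_key z hz g k l hkl (by omega)
  rw [hkey, map_zero]
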